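/- r(t) tends to 0 as t → +∞. -/

import Mathlib

open Real Filter Topology

open MeasureTheory Set FourierTransform

noncomputable def momI (k : ℕ) : ℝ := ∫ x in (-1:ℝ)..1, x ^ (2*k) * Real.sqrt (1 - x^2)

lemma hasDeriv_aux (k : ℕ) {x : ℝ} (hx : x ∈ Set.Ioo (-1:ℝ) 1) :
    HasDerivAt (fun y : ℝ => y^(2*k+1) * ((1 - y^2) * Real.sqrt (1 - y^2)))
      ((2*k+1 : ℝ) * (x^(2*k) * ((1-x^2) * Real.sqrt (1-x^2))) - 3 * (x^(2*k+2) * Real.sqrt (1-x^2))) x := by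
  have h1 : (0:ℝ) < 1 - x^2 := by nlinarith [hx.1, hx.2]
  have hs : Real.sqrt (1-x^2) ≠ 0 := by positivity
  have hs2 : Real.sqrt (1-x^2) ^ 2 = 1 - x^2 := Real.sq_sqrt h1.le
  have hsq : HasDerivAt (fun y : ℝ => 1 - y^2) (-(2*x)) x := by
    simpa using (hasDerivAt_pow 2 x).const_sub 1
  have hroot : HasDerivAt (fun y : ℝ => Real.sqrt (1 - y^2))
      (1 / (2 * Real.sqrt (1-x^2)) * (-(2*x))) x :=
    (Real.hasDerivAt_sqrt h1.ne').comp x hsq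
  have hg2 : HasDerivAt (fun y : ℝ => (1 - y^2) * Real.sqrt (1 - y^2))
      ((-(2*x)) * Real.sqrt (1-x^2) + (1-x^2) * (1 / (2 * Real.sqrt (1-x^2)) * (-(2*x)))) x :=
    hsq.mul hroot
  have hG : HasDerivAt (fun y : ℝ => y^(2*k+1) * ((1 - y^2) * Real.sqrt (1 - y^2))) _ x :=
    (hasDerivAt_pow (2*k+1) x).mul hg2
  convert hG using 1
  simp only [Nat.add_sub_cancel, Nat.cast_add, Nat.cast_mul, Nat.cast_ofNat, Nat.cast_one]
  field_simp
  linear_combination (-x^(2*k+2)) * hs2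

lemma momI_succ (k : ℕ) : momI (k+1) = (2*k+1)/(2*k+4) * momI k := by
  have hcont : ∀ (n : ℕ), Continuous fun x : ℝ => x ^ n * Real.sqrt (1 - x^2) := by
    intro n
    exact (continuous_pow n).mul (Real.continuous_sqrt.comp (by continuity))
  have key : ∫ x in (-1:ℝ)..1,
      ((2*k+1 : ℝ) * (x^(2*k) * ((1-x^2) * Real.sqrt (1-x^2))) - 3 * (x^(2*k+2) * Real.sqrt (1-x^2))) = 0 := by
    have hC : ContinuousOn (fun y : ℝ => y^(2*k+1) * ((1 - y^2) * Real.sqrt (1 - y^2)))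
        (Set.Icc (-1) 1) := by
      apply Continuous.continuousOn
      exact (continuous_pow _).mul ((by continuity : Continuous fun y : ℝ => 1 - y^2).mul
        (Real.continuous_sqrt.comp (by continuity)))
    have hI : IntervalIntegrable (fun x : ℝ =>
        (2*k+1 : ℝ) * (x^(2*k) * ((1-x^2) * Real.sqrt (1-x^2))) - 3 * (x^(2*k+2) * Real.sqrt (1-x^2)))
        MeasureTheory.volume (-1) 1 := by
      apply Continuous.intervalIntegrable
      have h1 : Continuous fun x : ℝ => x^(2*k) * ((1-x^2) * Real.sqrt (1-x^2)) :=
        (continuous_pow _).mul ((by continuity : Continuous fun y : ℝ => 1 - y^2).mul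
          (Real.continuous_sqrt.comp (by continuity)))
      exact ((continuous_const.mul h1)).sub (continuous_const.mul (hcont (2*k+2)))
    rw [intervalIntegral.integral_eq_sub_of_hasDeriv_right_of_le (by norm_num) hC
      (fun x hx => (hasDeriv_aux k hx).hasDerivWithinAt) hI]
    norm_num
  have hint1 : IntervalIntegrable (fun x : ℝ => x ^ (2*k) * Real.sqrt (1 - x^2))
      MeasureTheory.volume (-1) 1 := (hcont _).intervalIntegrable _ _
  have hint2 : IntervalIntegrable (fun x : ℝ => x ^ (2*k+2) * Real.sqrt (1 - x^2))
      MeasureTheory.volume (-1) 1 := (hcont _).intervalIntegrable _ _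
  have expand : ∀ x : ℝ,
      (2*k+1 : ℝ) * (x^(2*k) * ((1-x^2) * Real.sqrt (1-x^2))) - 3 * (x^(2*k+2) * Real.sqrt (1-x^2))
      = (2*k+1 : ℝ) * (x ^ (2*k) * Real.sqrt (1 - x^2)) - (2*k+4 : ℝ) * (x ^ (2*k+2) * Real.sqrt (1 - x^2)) := by
    intro x; ring
  rw [intervalIntegral.integral_congr (fun x _ => expand x)] at key
  rw [intervalIntegral.integral_sub ((hint1.const_mul _)) ((hint2.const_mul _)),
    intervalIntegral.integral_const_mul, intervalIntegral.integral_const_mul] at key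
  have h24 : (2*(k:ℝ)+4) ≠ 0 := by positivity
  have h2 : momI (k+1) = ∫ x in (-1:ℝ)..1, x ^ (2*k+2) * Real.sqrt (1 - x^2) := by
    unfold momI; norm_num [mul_add]
  rw [h2]
  unfold momI
  field_simp
  linarith [key]

lemma momI_eq (k : ℕ) : momI k = π * (2*k).factorial / (2 * 4^k * k.factorial * (k+1).factorial) := by
  induction k with
  | zero =>
    simp only [momI, Nat.factorial]
    norm_num
    rw [show (fun x : ℝ => Real.sqrt (1 - x^2)) = fun x : ℝ => Real.sqrt (1 - x^2) from rfl]
    simpa using integral_sqrt_one_sub_sq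
  | succ k ih =>
    rw [momI_succ, ih]
    have h1 : (2*(k+1)) = (2*k+1)+1 := by ring
    rw [h1, Nat.factorial_succ (2*k+1), Nat.factorial_succ (2*k), Nat.factorial_succ (k+1), Nat.factorial_succ k]
    push_cast
    have hk : ((2*k).factorial : ℝ) ≠ 0 := Nat.cast_ne_zero.mpr (Nat.factorial_ne_zero _)
    have hk2 : ((k).factorial : ℝ) ≠ 0 := Nat.cast_ne_zero.mpr (Nat.factorial_ne_zero _)
    have h4 : ((4:ℝ)^k) ≠ 0 := by positivity
    have h24 : (2*(k:ℝ)+4) ≠ 0 := by positivity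
    field_simp
    ring

/-- `r t = ∑_{k=0}^∞ (−1)^k t^{2k}/(k!·(k+1)!) = J₁(2t)/t`. -/
noncomputable def besselR (t : ℝ) : ℝ :=
  ∑' k : ℕ, (-1) ^ k * t ^ (2 * k) / (k.factorial * (k + 1).factorial)

lemma besselR_eq (t : ℝ) :
    besselR t = (2/π) * ∫ x in (-1:ℝ)..1, Real.sqrt (1 - x^2) * Real.cos (2*t*x) := by
  set F : ℕ → ℝ → ℝ := fun k x => Real.sqrt (1-x^2) * ((-1:ℝ)^k * (2*t*x)^(2*k) / (2*k).factorial)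
    with hF
  set μ := MeasureTheory.volume.restrict (Set.Ioc (-1:ℝ) 1) with hμ
  have hFcont : ∀ k, Continuous (F k) := by
    intro k
    exact ((Real.continuous_sqrt.comp (by continuity)).mul (by continuity))
  have hF_int : ∀ k : ℕ, MeasureTheory.Integrable (F k) μ :=
    fun k => (hFcont k).integrableOn_Ioc.integrable
  -- the norm bound
  have hbound : ∀ k : ℕ, ∀ x ∈ Set.Ioc (-1:ℝ) 1, ‖F k x‖ ≤ (2*|t|)^(2*k) / (2*k).factorial := by
    intro k x hx
    have hx1 : |x| ≤ 1 := abs_le.mpr ⟨hx.1.le, hx.2⟩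
    have h1 : Real.sqrt (1-x^2) ≤ 1 := by
      have h := Real.sqrt_le_sqrt (show 1-x^2 ≤ 1 by nlinarith [sq_nonneg x])
      simpa using h
    have h2 : |(-1:ℝ)^k * (2*t*x)^(2*k) / (2*k).factorial| ≤ (2*|t|)^(2*k) / (2*k).factorial := by
      rw [abs_div, abs_mul, abs_pow, abs_neg, abs_one, one_pow, one_mul, abs_pow]
      rw [abs_of_nonneg (by positivity : ((2*k).factorial:ℝ) ≥ 0)]
      apply div_le_div_of_nonneg_right ?_ (by positivity) |>.trans_eq rfl
      apply pow_le_pow_left₀ (abs_nonneg _)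
      rw [abs_mul, abs_mul, abs_two]
      calc 2 * |t| * |x| ≤ 2 * |t| * 1 := by
            apply mul_le_mul_of_nonneg_left hx1 (by positivity)
        _ = 2 * |t| := by ring
    calc ‖F k x‖ = Real.sqrt (1-x^2) * |(-1:ℝ)^k * (2*t*x)^(2*k) / (2*k).factorial| := by
          rw [hF]; rw [Real.norm_eq_abs, abs_mul, abs_of_nonneg (Real.sqrt_nonneg _)]
      _ ≤ 1 * ((2*|t|)^(2*k) / (2*k).factorial) := by
          apply mul_le_mul h1 h2 (abs_nonneg _) zero_le_one
      _ = (2*|t|)^(2*k) / (2*k).factorial := one_mul _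
  have hsum_bound : Summable (fun k : ℕ => 2 * ((2*|t|)^(2*k) / (2*k).factorial)) := by
    apply Summable.mul_left
    have h := Real.summable_pow_div_factorial (2*|t|)
    exact h.comp_injective (fun a b hab => by omega)
  have hF_sum : Summable fun k => ∫ x, ‖F k x‖ ∂μ := by
    apply Summable.of_nonneg_of_le (fun k => MeasureTheory.integral_nonneg (fun x => norm_nonneg _))
      ?_ hsum_bound
    intro k
    have : ∫ x, ‖F k x‖ ∂μ ≤ ∫ _x, (2*|t|)^(2*k) / (2*k).factorial ∂μ := by
      apply MeasureTheory.setIntegral_mono_on (hF_int k).norm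
        ((MeasureTheory.integrableOn_const_iff).mpr (Or.inr (by simp)))
        measurableSet_Ioc
      exact hbound k
    refine this.trans ?_
    rw [MeasureTheory.setIntegral_const]
    rw [MeasureTheory.measureReal_def, Real.volume_Ioc]
    rw [smul_eq_mul]
    rw [show ((1:ℝ) - -1) = 2 by norm_num]
    rw [ENNReal.toReal_ofReal (by norm_num : (2:ℝ) ≥ 0)]
  have hswap := MeasureTheory.integral_tsum_of_summable_integral_norm hF_int hF_sum
  -- pointwise sum
  have hpt : ∀ x : ℝ, (∑' k, F k x) = Real.sqrt (1-x^2) * Real.cos (2*t*x) := by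
    intro x
    rw [Real.cos_eq_tsum, ← tsum_mul_left]
  -- value of each integral
  have hval : ∀ k : ℕ, (∫ x, F k x ∂μ) = π/2 * ((-1)^k * t^(2*k) / (k.factorial * (k+1).factorial)) := by
    intro k
    have e1 : (∫ x, F k x ∂μ) = ∫ x in (-1:ℝ)..1, F k x := by
      rw [intervalIntegral.integral_of_le (by norm_num : (-1:ℝ) ≤ 1)]
    have e2 : ∀ x : ℝ, F k x = ((-1:ℝ)^k * (2*t)^(2*k) / (2*k).factorial) * (x^(2*k) * Real.sqrt (1-x^2)) := by
      intro x; simp only [hF]; rw [mul_pow (2*t) x]; ring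
    rw [e1, intervalIntegral.integral_congr (fun x _ => e2 x), intervalIntegral.integral_const_mul]
    rw [show (∫ x in (-1:ℝ)..1, x^(2*k) * Real.sqrt (1-x^2)) = momI k from rfl, momI_eq]
    have hk : ((2*k).factorial : ℝ) ≠ 0 := Nat.cast_ne_zero.mpr (Nat.factorial_ne_zero _)
    have hk2 : ((k).factorial : ℝ) ≠ 0 := Nat.cast_ne_zero.mpr (Nat.factorial_ne_zero _)
    have hk3 : (((k+1)).factorial : ℝ) ≠ 0 := Nat.cast_ne_zero.mpr (Nat.factorial_ne_zero _)
    have h4 : ((4:ℝ)^k) ≠ 0 := by positivity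
    have h2t : (2*t)^(2*k) = 4^k * t^(2*k) := by
      rw [mul_pow, pow_mul]; norm_num
    rw [h2t]
    field_simp
  have hπ : (π:ℝ) ≠ 0 := Real.pi_ne_zero
  have hmain : (∫ x in (-1:ℝ)..1, Real.sqrt (1 - x^2) * Real.cos (2*t*x)) = π/2 * besselR t := by
    rw [intervalIntegral.integral_of_le (by norm_num : (-1:ℝ) ≤ 1)]
    have : (∫ x in Set.Ioc (-1:ℝ) 1, Real.sqrt (1 - x^2) * Real.cos (2*t*x)) = ∫ x, (∑' k, F k x) ∂μ := by
      rw [hμ]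
      apply MeasureTheory.setIntegral_congr_fun measurableSet_Ioc
      intro x _
      exact (hpt x).symm
    rw [this, ← hswap]
    rw [besselR, ← tsum_mul_left]
    exact tsum_congr (fun k => hval k)
  rw [hmain]
  field_simp


lemma cos_integral_tendsto :
    Tendsto (fun t : ℝ => ∫ x in (-1:ℝ)..1, Real.sqrt (1 - x^2) * Real.cos (2*t*x)) atTop (𝓝 0) := by
  set g : ℝ → ℂ := Set.indicator (Set.Ioc (-1:ℝ) 1) (fun x => (Real.sqrt (1 - x^2) : ℂ)) with hg
  have hgi : MeasureTheory.Integrable g := by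
    apply MeasureTheory.IntegrableOn.integrable_indicator ?_ measurableSet_Ioc
    exact (Complex.continuous_ofReal.comp
      (Real.continuous_sqrt.comp (by continuity))).integrableOn_Ioc
  have hRL := Real.tendsto_integral_exp_smul_cocompact g
  have hmap : Tendsto (fun t : ℝ => -t/π) atTop (cocompact ℝ) := by
    apply Tendsto.mono_right ?_ _root_.atBot_le_cocompact
    have h1 : Tendsto (fun t : ℝ => t/π) atTop atTop :=
      Tendsto.atTop_div_const Real.pi_pos tendsto_id
    have hneg : Tendsto (fun t : ℝ => -(t/π)) atTop atBot := tendsto_neg_atTop_atBot.comp h1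
    have hee : (fun t : ℝ => -t/π) = fun t : ℝ => -(t/π) := by funext t; ring
    rw [hee]
    exact hneg
  have h2 := hRL.comp hmap
  have h3 := (Complex.continuous_re.tendsto 0).comp h2
  simp only [Complex.zero_re] at h3
  have heq : ∀ t : ℝ, (∫ v : ℝ, 𝐞 (-(v * (-t/π))) • g v).re
      = ∫ x in (-1:ℝ)..1, Real.sqrt (1 - x^2) * Real.cos (2*t*x) := by
    intro t
    have hInt : MeasureTheory.Integrable (fun v : ℝ => 𝐞 (-(v * (-t/π))) • g v) :=
      by simpa [mul_comm] using (Real.fourierIntegral_convergent_iff (-t/π)).mpr hgi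
    rw [← RCLike.re_eq_complex_re, ← _root_.integral_re hInt]
    simp only [RCLike.re_eq_complex_re]
    have hpt : ∀ v : ℝ, (𝐞 (-(v * (-t/π))) • g v).re
        = Set.indicator (Set.Ioc (-1:ℝ) 1) (fun x => Real.sqrt (1 - x^2) * Real.cos (2*t*x)) v := by
      intro v
      by_cases hv : v ∈ Set.Ioc (-1:ℝ) 1
      · rw [hg, Set.indicator_of_mem hv, Set.indicator_of_mem hv]
        rw [Circle.smul_def, Real.fourierChar_apply]
        have harg : 2 * π * -(v * (-t/π)) = 2*t*v := by field_simp
        rw [harg, smul_eq_mul, Complex.mul_re, Complex.exp_ofReal_mul_I_re, Complex.exp_ofReal_mul_I_im]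
        simp [mul_comm]
      · rw [hg, Set.indicator_of_notMem hv, Set.indicator_of_notMem hv, smul_zero]
        simp
    calc (∫ v : ℝ, (𝐞 (-(v * (-t/π))) • g v).re)
        = ∫ v : ℝ, Set.indicator (Set.Ioc (-1:ℝ) 1) (fun x => Real.sqrt (1 - x^2) * Real.cos (2*t*x)) v :=
          MeasureTheory.integral_congr_ae (Filter.Eventually.of_forall hpt)
      _ = ∫ x in Set.Ioc (-1:ℝ) 1, Real.sqrt (1 - x^2) * Real.cos (2*t*x) :=
          MeasureTheory.integral_indicator measurableSet_Ioc
      _ = ∫ x in (-1:ℝ)..1, Real.sqrt (1 - x^2) * Real.cos (2*t*x) :=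
          (intervalIntegral.integral_of_le (by norm_num : (-1:ℝ) ≤ 1)).symm
  have : (fun t : ℝ => ∫ x in (-1:ℝ)..1, Real.sqrt (1 - x^2) * Real.cos (2*t*x))
      = fun t => (Complex.re ∘ ((fun w => ∫ v : ℝ, 𝐞 (-(v * w)) • g v) ∘ fun t : ℝ => -t/π)) t := by
    funext t
    simp only [Function.comp]
    exact (heq t).symm
  rw [this]
  exact h3

/-- `r(t) → 0` as `t → +∞`. -/
theorem besselR_tendsto_zero : Tendsto besselR atTop (𝓝 0) := by
  have h := cos_integral_tendsto.const_mul (2/π)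
  rw [mul_zero] at h
  apply h.congr
  intro t
  exact (besselR_eq t).symm
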